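/- Let α : ℝ² × ℝ² → ℝ be a continuous bilinear map. Then there exists a constant C > 0 such that for all continuous compactly supported a₀, a₁, a₂ : ℝ² → ℂ, |∫_{ℝ²} ∫_{ℝ²} α(u, v) a₀(−u−v) a₁(u) a₂(v) du dv| ≤ C ν₃(a₀) ν₃(a₁) ν₃(a₂), where ν₃(a) := ‖(1+‖·‖)³ a‖_{L²(ℝ²)}. In particular, the cyclic 2-cocycle τ_α on the convolution algebra C_c^∞(ℝ²) associated to an invariant 2-form α extends continuously to the rapid decay algebra H^∞_L(ℝ²). -/

import Mathlib

open MeasureTheory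
open scoped ENNReal

/-- The rapid decay seminorm `ν_k(a) = ‖(1+‖·‖)^k a‖_{L²}` on functions on `ℝ²`. -/
noncomputable def rdSeminorm2 (k : ℕ) (a : EuclideanSpace ℝ (Fin 2) → ℂ) : ℝ≥0∞ :=
  eLpNorm (fun x => ((1 + ‖x‖) ^ k : ℝ) • a x) 2 volume

namespace AreaCocycleAux

local notation "E2" => EuclideanSpace ℝ (Fin 2)

lemma rd_eq (a : E2 → ℂ) :
    rdSeminorm2 3 a
      = (∫⁻ x : E2, (ENNReal.ofReal ((1 + ‖x‖) ^ (3:ℕ)) * (‖a x‖₊ : ℝ≥0∞)) ^ (2:ℝ)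
          ∂volume) ^ (1/2 : ℝ) := by
  rw [rdSeminorm2, eLpNorm_eq_lintegral_rpow_enorm_toReal two_ne_zero ENNReal.ofNat_ne_top]
  simp only [ENNReal.toReal_ofNat]
  congr 1
  refine lintegral_congr fun x => ?_
  congr 1
  rw [enorm_smul]
  congr 1
  rw [Real.enorm_eq_ofReal (by positivity)]

lemma lemA (a : E2 → ℂ) :
    (∫⁻ x : E2, (‖a x‖₊ : ℝ≥0∞) ^ (2:ℝ)) ^ (1/2 : ℝ) ≤ rdSeminorm2 3 a := by
  rw [rd_eq]
  refine ENNReal.rpow_le_rpow (lintegral_mono fun x => ?_) (by norm_num)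
  refine ENNReal.rpow_le_rpow ?_ (by norm_num)
  refine le_mul_of_one_le_left zero_le ?_
  rw [ENNReal.one_le_ofReal]
  exact one_le_pow₀ (by simp [norm_nonneg])

lemma lemB (a : E2 → ℂ) :
    (∫⁻ x : E2, (ENNReal.ofReal (1 + ‖x‖) * (‖a x‖₊ : ℝ≥0∞)) ^ (2:ℝ)) ^ (1/2 : ℝ)
      ≤ rdSeminorm2 3 a := by
  rw [rd_eq]
  refine ENNReal.rpow_le_rpow (lintegral_mono fun x => ?_) (by norm_num)
  refine ENNReal.rpow_le_rpow (mul_le_mul_left (ENNReal.ofReal_le_ofReal ?_) _) (by norm_num)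
  exact le_self_pow₀ (by simp [norm_nonneg]) (by norm_num)

lemma lemC (a : E2 → ℂ) (ha : Continuous a) :
    ∫⁻ x : E2, ENNReal.ofReal (1 + ‖x‖) * (‖a x‖₊ : ℝ≥0∞)
      ≤ (∫⁻ x : E2, ENNReal.ofReal ((1 + ‖x‖) ^ (-(4:ℝ)))) ^ (1/2 : ℝ) * rdSeminorm2 3 a := by
  have hconj : Real.HolderConjugate 2 2 := Real.HolderConjugate.two_two
  have hpt : ∀ x : E2, ENNReal.ofReal (1 + ‖x‖) * (‖a x‖₊ : ℝ≥0∞)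
      = ((fun x : E2 => ENNReal.ofReal ((1 + ‖x‖) ^ (-(2:ℝ)))) *
         (fun x : E2 => ENNReal.ofReal ((1 + ‖x‖) ^ (3:ℕ)) * (‖a x‖₊ : ℝ≥0∞))) x := by
    intro x
    have h1 : (0:ℝ) < 1 + ‖x‖ := by positivity
    simp only [Pi.mul_apply, ← mul_assoc]
    rw [← ENNReal.ofReal_mul (by positivity)]
    congr 2
    rw [← Real.rpow_natCast (1 + ‖x‖) 3, ← Real.rpow_add h1]
    norm_num
  calc ∫⁻ x : E2, ENNReal.ofReal (1 + ‖x‖) * (‖a x‖₊ : ℝ≥0∞)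
      = ∫⁻ x : E2, ((fun x : E2 => ENNReal.ofReal ((1 + ‖x‖) ^ (-(2:ℝ)))) *
          (fun x : E2 => ENNReal.ofReal ((1 + ‖x‖) ^ (3:ℕ)) * (‖a x‖₊ : ℝ≥0∞))) x :=
        lintegral_congr hpt
    _ ≤ (∫⁻ x : E2, ENNReal.ofReal ((1 + ‖x‖) ^ (-(2:ℝ))) ^ (2:ℝ)) ^ (1/2:ℝ) *
          (∫⁻ x : E2, (ENNReal.ofReal ((1 + ‖x‖) ^ (3:ℕ)) * (‖a x‖₊ : ℝ≥0∞)) ^ (2:ℝ)) ^ (1/2:ℝ) :=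
        ENNReal.lintegral_mul_le_Lp_mul_Lq volume hconj (by fun_prop) (by fun_prop)
    _ = (∫⁻ x : E2, ENNReal.ofReal ((1 + ‖x‖) ^ (-(4:ℝ)))) ^ (1/2 : ℝ) * rdSeminorm2 3 a := by
        rw [rd_eq]
        congr 2
        refine lintegral_congr fun x => ?_
        rw [ENNReal.ofReal_rpow_of_nonneg (by positivity) (by norm_num),
          ← Real.rpow_mul (by positivity)]
        norm_num

end AreaCocycleAux

open AreaCocycleAux in
/-- Let `α : ℝ² × ℝ² → ℝ` be a continuous bilinear map.  Then there is
`C > 0` such that for all continuous compactly supported `a₀, a₁, a₂ : ℝ² → ℂ`,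
`|∫∫ α(u,v) a₀(−u−v) a₁(u) a₂(v) du dv| ≤ C ν₃(a₀) ν₃(a₁) ν₃(a₂)`: the cyclic 2-cocycle on
the convolution algebra of `ℝ²` associated to an invariant 2-form extends continuously to
the rapid decay algebra `H^∞_L(ℝ²)`. -/
theorem area_cocycle_extends_to_rapid_decay
    (α : EuclideanSpace ℝ (Fin 2) →L[ℝ] EuclideanSpace ℝ (Fin 2) →L[ℝ] ℝ) :
    ∃ C > (0 : ℝ), ∀ a₀ a₁ a₂ : EuclideanSpace ℝ (Fin 2) → ℂ,
      Continuous a₀ → HasCompactSupport a₀ →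
      Continuous a₁ → HasCompactSupport a₁ →
      Continuous a₂ → HasCompactSupport a₂ →
        ENNReal.ofReal
            ‖∫ u : EuclideanSpace ℝ (Fin 2), ∫ v : EuclideanSpace ℝ (Fin 2),
                ((α u v : ℝ) : ℂ) * a₀ (-u - v) * a₁ u * a₂ v‖ ≤
          ENNReal.ofReal C * rdSeminorm2 3 a₀ * rdSeminorm2 3 a₁ * rdSeminorm2 3 a₂ := by
  classical
  set K : ℝ≥0∞ :=
    (∫⁻ x : EuclideanSpace ℝ (Fin 2), ENNReal.ofReal ((1 + ‖x‖) ^ (-(4:ℝ)))) ^ (1/2 : ℝ) with hKdef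
  have hJ : (∫⁻ x : EuclideanSpace ℝ (Fin 2), ENNReal.ofReal ((1 + ‖x‖) ^ (-(4:ℝ)))) < ∞ :=
    finite_integral_one_add_norm (by simp; norm_num)
  have hK : K < ∞ := ENNReal.rpow_lt_top_of_nonneg (by norm_num) hJ.ne
  refine ⟨(‖α‖ + 1) * (K.toReal + 1), by positivity, ?_⟩
  intro a₀ a₁ a₂ h₀c h₀s h₁c h₁s h₂c h₂s
  have hconj : Real.HolderConjugate 2 2 := Real.HolderConjugate.two_two
  set ν₀ := rdSeminorm2 3 a₀
  set ν₁ := rdSeminorm2 3 a₁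
  set ν₂ := rdSeminorm2 3 a₂
  set c : ℝ≥0∞ := ENNReal.ofReal ‖α‖ with hc
  set P : EuclideanSpace ℝ (Fin 2) → ℝ≥0∞ := fun x => ENNReal.ofReal (1 + ‖x‖) with hP
  set h0 : EuclideanSpace ℝ (Fin 2) → ℝ≥0∞ := fun x => (‖a₀ x‖₊ : ℝ≥0∞) with hh0
  set h1 : EuclideanSpace ℝ (Fin 2) → ℝ≥0∞ := fun x => (‖a₁ x‖₊ : ℝ≥0∞) with hh1
  set h2 : EuclideanSpace ℝ (Fin 2) → ℝ≥0∞ := fun x => (‖a₂ x‖₊ : ℝ≥0∞) with hh2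
  set N₀ : ℝ≥0∞ := (∫⁻ x, h0 x ^ (2:ℝ)) ^ (1/2:ℝ) with hN0
  set N₂ : ℝ≥0∞ := (∫⁻ x, (P x * h2 x) ^ (2:ℝ)) ^ (1/2:ℝ) with hN2
  -- pointwise bound
  have hpt : ∀ u v : EuclideanSpace ℝ (Fin 2),
      (‖((α u v : ℝ) : ℂ) * a₀ (-u - v) * a₁ u * a₂ v‖₊ : ℝ≥0∞)
        ≤ (c * (P u * h1 u)) * (h0 (-u - v) * (P v * h2 v)) := by
    intro u v
    have hA : (‖((α u v : ℝ) : ℂ)‖₊ : ℝ≥0∞) ≤ c * P u * P v := by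
      rw [Complex.nnnorm_real, ← enorm_eq_nnnorm, Real.enorm_eq_ofReal_abs, hc, hP,
        ← ENNReal.ofReal_mul (norm_nonneg α), ← ENNReal.ofReal_mul (by positivity)]
      refine ENNReal.ofReal_le_ofReal ?_
      have h := α.le_opNorm₂ u v
      rw [Real.norm_eq_abs] at h
      nlinarith [norm_nonneg u, norm_nonneg v, norm_nonneg α, abs_nonneg (α u v),
        (norm_nonneg (α u)), α.le_opNorm u]
    calc (‖((α u v : ℝ) : ℂ) * a₀ (-u - v) * a₁ u * a₂ v‖₊ : ℝ≥0∞)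
        = (‖((α u v : ℝ) : ℂ)‖₊ : ℝ≥0∞) * (h0 (-u - v) * (h1 u * h2 v)) := by
          simp only [nnnorm_mul, ENNReal.coe_mul, hh0, hh1, hh2]; ring
      _ ≤ (c * P u * P v) * (h0 (-u - v) * (h1 u * h2 v)) :=
          mul_le_mul_left hA _
      _ = (c * (P u * h1 u)) * (h0 (-u - v) * (P v * h2 v)) := by ring
  -- translation invariance
  have htrans : ∀ u : EuclideanSpace ℝ (Fin 2),
      ∫⁻ v, h0 (-u - v) ^ (2:ℝ) = ∫⁻ x, h0 x ^ (2:ℝ) := by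
    intro u
    have T : MeasurePreserving (fun v : EuclideanSpace ℝ (Fin 2) => -u + -v) volume volume :=
      (measurePreserving_add_left volume (-u)).comp (Measure.measurePreserving_neg volume)
    have hm0 : Measurable fun x : EuclideanSpace ℝ (Fin 2) => h0 x ^ (2:ℝ) := by
      simp only [hh0]; fun_prop
    simp_rw [sub_eq_add_neg]
    exact T.lintegral_comp hm0
  -- inner Hölder
  have hinner : ∀ u : EuclideanSpace ℝ (Fin 2),
      ∫⁻ v, h0 (-u - v) * (P v * h2 v) ≤ N₀ * N₂ := by
    intro u
    calc ∫⁻ v, h0 (-u - v) * (P v * h2 v)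
        = ∫⁻ v, ((fun v => h0 (-u - v)) * fun v => P v * h2 v) v := lintegral_congr fun v => rfl
      _ ≤ (∫⁻ v, h0 (-u - v) ^ (2:ℝ)) ^ (1/2:ℝ) * (∫⁻ v, (P v * h2 v) ^ (2:ℝ)) ^ (1/2:ℝ) := by
          refine ENNReal.lintegral_mul_le_Lp_mul_Lq volume hconj ?_ ?_
          · simp_rw [hh0, sub_eq_add_neg]; fun_prop
          · simp_rw [hh2, hP]; fun_prop
      _ = N₀ * N₂ := by rw [htrans u]
  have hC : c * K ≤ ENNReal.ofReal ((‖α‖ + 1) * (K.toReal + 1)) := by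
    conv_lhs => rw [← ENNReal.ofReal_toReal hK.ne]
    rw [hc, ← ENNReal.ofReal_mul (norm_nonneg α)]
    refine ENNReal.ofReal_le_ofReal ?_
    nlinarith [norm_nonneg α, ENNReal.toReal_nonneg (a := K)]
  calc ENNReal.ofReal ‖∫ u : EuclideanSpace ℝ (Fin 2), ∫ v : EuclideanSpace ℝ (Fin 2),
          ((α u v : ℝ) : ℂ) * a₀ (-u - v) * a₁ u * a₂ v‖
      = (‖∫ u : EuclideanSpace ℝ (Fin 2), ∫ v : EuclideanSpace ℝ (Fin 2),
          ((α u v : ℝ) : ℂ) * a₀ (-u - v) * a₁ u * a₂ v‖₊ : ℝ≥0∞) :=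
        ofReal_norm_eq_enorm _
    _ ≤ ∫⁻ u, (‖∫ v : EuclideanSpace ℝ (Fin 2),
          ((α u v : ℝ) : ℂ) * a₀ (-u - v) * a₁ u * a₂ v‖₊ : ℝ≥0∞) :=
        enorm_integral_le_lintegral_enorm _
    _ ≤ ∫⁻ u, ∫⁻ v, (‖((α u v : ℝ) : ℂ) * a₀ (-u - v) * a₁ u * a₂ v‖₊ : ℝ≥0∞) :=
        lintegral_mono fun u => enorm_integral_le_lintegral_enorm _
    _ ≤ ∫⁻ u, ∫⁻ v, (c * (P u * h1 u)) * (h0 (-u - v) * (P v * h2 v)) :=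
        lintegral_mono fun u => lintegral_mono fun v => hpt u v
    _ = ∫⁻ u, (c * (P u * h1 u)) * ∫⁻ v, h0 (-u - v) * (P v * h2 v) := by
        refine lintegral_congr fun u => ?_
        refine lintegral_const_mul _ ?_
        simp only [hh0, hh2, hP, sub_eq_add_neg]; fun_prop
    _ ≤ ∫⁻ u, (c * (P u * h1 u)) * (N₀ * N₂) :=
        lintegral_mono fun u => mul_le_mul_right (hinner u) _
    _ = (c * (N₀ * N₂)) * ∫⁻ u, P u * h1 u := by
        have hm : Measurable fun u : EuclideanSpace ℝ (Fin 2) => P u * h1 u := by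
          simp only [hh1, hP]; fun_prop
        rw [← lintegral_const_mul _ hm]
        refine lintegral_congr fun u => ?_; ring
    _ ≤ (c * (N₀ * N₂)) * (K * ν₁) := mul_le_mul_right (lemC a₁ h₁c) _
    _ ≤ (c * (ν₀ * ν₂)) * (K * ν₁) := by
        gcongr
        · exact lemA a₀
        · exact lemB a₂
    _ = (c * K) * ν₀ * ν₁ * ν₂ := by ring
    _ ≤ ENNReal.ofReal ((‖α‖ + 1) * (K.toReal + 1)) * ν₀ * ν₁ * ν₂ := by gcongr
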